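/- arXiv:1209.3249 — 6 statements merged into one kernel-verified Lean document; each statement's English description precedes it below -/
import Mathlib

section
/- For F a lifting of a degree-one continuous circle map and 0 ≤ α ≤ ‖F − F_l‖_∞, the water function F_α := (min{F, F_l + α})_u is a well-defined non-decreasing continuous map with F_α(x+1) = F_α(x)+1 for all x; moreover F_0 = F_l, F_{‖F−F_l‖_∞} = F_u, and F_α ≤ F_{α'} whenever α ≤ α'. -/
noncomputable def lowerLift (F : ℝ → ℝ) (x : ℝ) : ℝ := sInf (F '' Set.Ici x)

noncomputable def upperLift (F : ℝ → ℝ) (x : ℝ) : ℝ := sSup (F '' Set.Iic x)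

/-- The sup norm `‖F - F_l‖_∞`. -/
noncomputable def supDiff (F : ℝ → ℝ) : ℝ := ⨆ x : ℝ, (F x - lowerLift F x)

/-- The water function of level `α`:  `F_α := (min{F, F_l + α})_u`. -/
noncomputable def water (F : ℝ → ℝ) (α : ℝ) : ℝ → ℝ :=
  upperLift (fun y => min (F y) (lowerLift F y + α))

section Aux

open Set

variable {G : ℝ → ℝ}

lemma lift_add_nat (h : ∀ x, G (x + 1) = G x + 1) (x : ℝ) :
    ∀ n : ℕ, G (x + n) = G x + n := by
  intro n
  induction n with
  | zero => simp
  | succ k ih =>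
    have : x + (k + 1 : ℕ) = (x + k) + 1 := by push_cast; ring
    rw [this, h, ih]; push_cast; ring

lemma bddAbove_image_Iic (hc : Continuous G) (h : ∀ x, G (x + 1) = G x + 1) (x : ℝ) :
    BddAbove (G '' Iic x) := by
  obtain ⟨M, hM⟩ := (isCompact_Icc (a := x) (b := x + 1)).bddAbove_image hc.continuousOn
  refine ⟨M, ?_⟩
  rintro _ ⟨y, hy, rfl⟩
  simp only [mem_Iic] at hy
  set n : ℕ := (⌈x - y⌉).toNat with hn
  have hn0 : (0:ℤ) ≤ ⌈x - y⌉ := Int.ceil_nonneg (by linarith)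
  have hcast : (n : ℝ) = (⌈x - y⌉ : ℝ) := by
    rw [hn]; exact_mod_cast congrArg (fun z : ℤ => (z : ℝ)) (Int.toNat_of_nonneg hn0)
  have h1 : x ≤ y + n := by
    have := Int.le_ceil (x - y); rw [hcast]; linarith
  have h2 : y + n ≤ x + 1 := by
    have := Int.ceil_lt_add_one (x - y); rw [hcast]; linarith
  have hmem : y + (n:ℝ) ∈ Icc x (x + 1) := ⟨h1, h2⟩
  have : G (y + n) ≤ M := hM ⟨y + n, hmem, rfl⟩
  have := lift_add_nat h y n
  have hn0' : (0:ℝ) ≤ (n:ℝ) := by positivity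
  linarith [lift_add_nat h y n]

lemma bddBelow_image_Ici (hc : Continuous G) (h : ∀ x, G (x + 1) = G x + 1) (x : ℝ) :
    BddBelow (G '' Ici x) := by
  obtain ⟨M, hM⟩ := (isCompact_Icc (a := x) (b := x + 1)).bddBelow_image hc.continuousOn
  refine ⟨M, ?_⟩
  rintro _ ⟨y, hy, rfl⟩
  simp only [mem_Ici] at hy
  set n : ℕ := (⌊y - x⌋).toNat with hn
  have hn0 : (0:ℤ) ≤ ⌊y - x⌋ := Int.floor_nonneg.2 (by linarith)
  have hcast : (n : ℝ) = (⌊y - x⌋ : ℝ) := by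
    rw [hn]; exact_mod_cast congrArg (fun z : ℤ => (z : ℝ)) (Int.toNat_of_nonneg hn0)
  have h1 : x ≤ y - n := by
    have := Int.floor_le (y - x); rw [hcast]; linarith
  have h2 : y - n ≤ x + 1 := by
    have := Int.lt_floor_add_one (y - x); rw [hcast]; linarith
  have hmem : y - (n:ℝ) ∈ Icc x (x + 1) := ⟨by linarith, by linarith⟩
  have hlift := lift_add_nat h (y - n) n
  have : M ≤ G (y - n) := hM ⟨y - n, hmem, rfl⟩
  have hn0' : (0:ℝ) ≤ (n:ℝ) := by positivity
  have : y - (n:ℝ) + (n:ℝ) = y := by ring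
  calc M ≤ G (y - n) := hM ⟨y - n, hmem, rfl⟩
    _ ≤ G (y - n) + n := by linarith
    _ = G (y - (n:ℝ) + (n:ℝ)) := (lift_add_nat h (y - n) n).symm
    _ = G y := by ring_nf

lemma le_upperLift (hc : Continuous G) (h : ∀ x, G (x + 1) = G x + 1) (x : ℝ) :
    G x ≤ upperLift G x :=
  le_csSup (bddAbove_image_Iic hc h x) ⟨x, self_mem_Iic, rfl⟩

lemma upperLift_mono (hc : Continuous G) (h : ∀ x, G (x + 1) = G x + 1) :
    Monotone (upperLift G) := by
  intro a b hab
  exact csSup_le_csSup (bddAbove_image_Iic hc h b) ⟨G a, ⟨a, self_mem_Iic, rfl⟩⟩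
    (image_mono (Iic_subset_Iic.2 hab))

lemma sSup_image_add_one {s : Set ℝ} (hne : s.Nonempty) (hbdd : BddAbove s) :
    sSup ((fun z => z + 1) '' s) = sSup s + 1 := by
  obtain ⟨M, hM⟩ := hbdd
  have hbdd' : BddAbove ((fun z => z + 1) '' s) := by
    refine ⟨M + 1, ?_⟩; rintro _ ⟨z, hz, rfl⟩; exact add_le_add_left (hM hz) 1
  apply le_antisymm
  · refine csSup_le (hne.image _) ?_
    rintro _ ⟨z, hz, rfl⟩
    exact add_le_add_left (le_csSup ⟨M, hM⟩ hz) 1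
  · have : sSup s ≤ sSup ((fun z => z + 1) '' s) - 1 := by
      refine csSup_le hne fun z hz => ?_
      have := le_csSup hbdd' (⟨z, hz, rfl⟩ : z + 1 ∈ (fun z => z + 1) '' s)
      linarith
    linarith

lemma upperLift_add_one (h : ∀ x, G (x + 1) = G x + 1) (x : ℝ)
    (hbdd : BddAbove (G '' Iic x)) :
    upperLift G (x + 1) = upperLift G x + 1 := by
  have hset : G '' Iic (x + 1) = (fun z => z + 1) '' (G '' Iic x) := by
    ext z
    simp only [mem_image, mem_Iic]
    constructor
    · rintro ⟨y, hy, rfl⟩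
      exact ⟨G (y - 1), ⟨y - 1, by linarith, rfl⟩, by
        have := h (y - 1); simp only [sub_add_cancel] at this; linarith⟩
    · rintro ⟨w, ⟨y, hy, rfl⟩, rfl⟩
      exact ⟨y + 1, by linarith, h y⟩
  have hne : (G '' Iic x).Nonempty := ⟨G x, x, self_mem_Iic, rfl⟩
  rw [upperLift, hset, sSup_image_add_one hne hbdd]
  rfl

lemma upperLift_continuous (hc : Continuous G) (h : ∀ x, G (x + 1) = G x + 1) :
    Continuous (upperLift G) := by
  rw [continuous_iff_continuousAt]
  intro x
  rw [Metric.continuousAt_iff]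
  intro ε hε
  obtain ⟨δ, hδ, hδ'⟩ := Metric.continuousAt_iff.1 (hc.continuousAt (x := x)) (ε/3)
    (by linarith)
  refine ⟨δ, hδ, fun y hy => ?_⟩
  have key : ∀ a b C, a ≤ b → 0 ≤ C →
      (∀ t, a < t → t ≤ b → G t ≤ upperLift G a + C) →
      upperLift G b ≤ upperLift G a + C := by
    intro a b C hab hC hbound
    refine csSup_le ⟨G b, b, self_mem_Iic, rfl⟩ ?_
    rintro _ ⟨t, ht, rfl⟩
    simp only [mem_Iic] at ht
    rcases le_or_gt t a with h' | h'
    · have h2 : G t ≤ upperLift G a := le_csSup (bddAbove_image_Iic hc h a) ⟨t, h', rfl⟩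
      linarith
    · exact hbound t h' ht
  have hGx := le_upperLift hc h x
  have hGy := le_upperLift hc h y
  have hyx : |y - x| < δ := by rwa [Real.dist_eq] at hy
  have hGyx : |G y - G x| < ε / 3 := by
    have := hδ' hy; rwa [Real.dist_eq] at this
  rw [Real.dist_eq, abs_sub_lt_iff]
  rcases le_total x y with hxy | hxy
  · have h1 : upperLift G x ≤ upperLift G y := upperLift_mono hc h hxy
    have h2 : upperLift G y ≤ upperLift G x + ε / 3 := by
      refine key x y _ hxy (by linarith) fun t ht1 ht2 => ?_
      have hd : dist t x < δ := by
        rw [Real.dist_eq, abs_of_nonneg (by linarith)]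
        have : y - x ≤ |y - x| := le_abs_self _
        linarith
      have := hδ' hd
      rw [Real.dist_eq, abs_sub_lt_iff] at this
      linarith
    constructor <;> linarith
  · have h1 : upperLift G y ≤ upperLift G x := upperLift_mono hc h hxy
    have h2 : upperLift G x ≤ upperLift G y + 2 * (ε / 3) := by
      refine key y x _ hxy (by linarith) fun t ht1 ht2 => ?_
      have hd : dist t x < δ := by
        rw [Real.dist_eq, abs_of_nonpos (by linarith)]
        have : x - y ≤ |y - x| := by rw [abs_sub_comm]; exact le_abs_self _
        linarith
      have h3 := hδ' hd
      rw [Real.dist_eq, abs_sub_lt_iff] at h3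
      rw [abs_sub_lt_iff] at hGyx
      linarith
    constructor <;> linarith

variable {F : ℝ → ℝ}

lemma lowerLift_le (hc : Continuous F) (h : ∀ x, F (x + 1) = F x + 1) (x : ℝ) :
    lowerLift F x ≤ F x :=
  csInf_le (bddBelow_image_Ici hc h x) ⟨x, self_mem_Ici, rfl⟩

lemma lowerLift_mono (hc : Continuous F) (h : ∀ x, F (x + 1) = F x + 1) :
    Monotone (lowerLift F) := by
  intro a b hab
  exact csInf_le_csInf (bddBelow_image_Ici hc h a) ⟨F b, b, self_mem_Ici, rfl⟩
    (image_mono (Ici_subset_Ici.2 hab))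

lemma sInf_image_add_one {s : Set ℝ} (hne : s.Nonempty) (hbdd : BddBelow s) :
    sInf ((fun z => z + 1) '' s) = sInf s + 1 := by
  obtain ⟨M, hM⟩ := hbdd
  have hbdd' : BddBelow ((fun z => z + 1) '' s) := by
    refine ⟨M + 1, ?_⟩; rintro _ ⟨z, hz, rfl⟩; exact add_le_add_left (hM hz) 1
  apply le_antisymm
  · have : sInf ((fun z => z + 1) '' s) - 1 ≤ sInf s := by
      refine le_csInf hne fun z hz => ?_
      have := csInf_le hbdd' (⟨z, hz, rfl⟩ : z + 1 ∈ (fun z => z + 1) '' s)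
      linarith
    linarith
  · refine le_csInf (hne.image _) ?_
    rintro _ ⟨z, hz, rfl⟩
    exact add_le_add_left (csInf_le ⟨M, hM⟩ hz) 1

lemma lowerLift_add_one (hc : Continuous F) (h : ∀ x, F (x + 1) = F x + 1) (x : ℝ) :
    lowerLift F (x + 1) = lowerLift F x + 1 := by
  have hset : F '' Ici (x + 1) = (fun z => z + 1) '' (F '' Ici x) := by
    ext z
    simp only [mem_image, mem_Ici]
    constructor
    · rintro ⟨y, hy, rfl⟩
      exact ⟨F (y - 1), ⟨y - 1, by linarith, rfl⟩, by
        have := h (y - 1); simp only [sub_add_cancel] at this; linarith⟩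
    · rintro ⟨w, ⟨y, hy, rfl⟩, rfl⟩
      exact ⟨y + 1, by linarith, h y⟩
  have hne : (F '' Ici x).Nonempty := ⟨F x, x, self_mem_Ici, rfl⟩
  rw [lowerLift, hset, sInf_image_add_one hne (bddBelow_image_Ici hc h x)]
  rfl

lemma lowerLift_continuous (hc : Continuous F) (h : ∀ x, F (x + 1) = F x + 1) :
    Continuous (lowerLift F) := by
  rw [continuous_iff_continuousAt]
  intro x
  rw [Metric.continuousAt_iff]
  intro ε hε
  obtain ⟨δ, hδ, hδ'⟩ := Metric.continuousAt_iff.1 (hc.continuousAt (x := x)) (ε/3)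
    (by linarith)
  refine ⟨δ, hδ, fun y hy => ?_⟩
  have key : ∀ a b C, a ≤ b → 0 ≤ C →
      (∀ t, a ≤ t → t < b → lowerLift F b - C ≤ F t) →
      lowerLift F b ≤ lowerLift F a + C := by
    intro a b C hab hC hbound
    have : lowerLift F b - C ≤ lowerLift F a := by
      refine le_csInf ⟨F a, a, self_mem_Ici, rfl⟩ ?_
      rintro _ ⟨t, ht, rfl⟩
      simp only [mem_Ici] at ht
      rcases lt_or_ge t b with h' | h'
      · exact hbound t ht h'
      · have h2 : lowerLift F b ≤ F t :=
          csInf_le (bddBelow_image_Ici hc h b) (⟨t, h', rfl⟩ : F t ∈ F '' Ici b)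
        linarith
    linarith
  have hFx := lowerLift_le hc h x
  have hFy := lowerLift_le hc h y
  have hyx : |y - x| < δ := by rwa [Real.dist_eq] at hy
  have hFyx : |F y - F x| < ε / 3 := by
    have := hδ' hy; rwa [Real.dist_eq] at this
  rw [Real.dist_eq, abs_sub_lt_iff]
  rcases le_total x y with hxy | hxy
  · have h1 : lowerLift F x ≤ lowerLift F y := lowerLift_mono hc h hxy
    have h2 : lowerLift F y ≤ lowerLift F x + 2 * (ε / 3) := by
      refine key x y _ hxy (by linarith) fun t ht1 ht2 => ?_
      have hd : dist t x < δ := by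
        rw [Real.dist_eq, abs_of_nonneg (by linarith)]
        have : y - x ≤ |y - x| := le_abs_self _
        linarith
      have h3 := hδ' hd
      rw [Real.dist_eq, abs_sub_lt_iff] at h3
      rw [abs_sub_lt_iff] at hFyx
      linarith
    constructor <;> linarith
  · have h1 : lowerLift F y ≤ lowerLift F x := lowerLift_mono hc h hxy
    have h2 : lowerLift F x ≤ lowerLift F y + ε / 3 := by
      refine key y x _ hxy (by linarith) fun t ht1 ht2 => ?_
      have hd : dist t x < δ := by
        rw [Real.dist_eq, abs_of_nonpos (by linarith)]
        have : x - y ≤ |y - x| := by rw [abs_sub_comm]; exact le_abs_self _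
        linarith
      have h3 := hδ' hd
      rw [Real.dist_eq, abs_sub_lt_iff] at h3
      linarith
    constructor <;> linarith

end Aux

theorem water_props (F : ℝ → ℝ) (hFc : Continuous F)
    (hFd : ∀ x : ℝ, F (x + 1) = F x + 1) :
    (∀ α ∈ Set.Icc 0 (supDiff F),
        Monotone (water F α) ∧ Continuous (water F α) ∧
        ∀ x : ℝ, water F α (x + 1) = water F α x + 1) ∧
    water F 0 = lowerLift F ∧
    water F (supDiff F) = upperLift F ∧
    (∀ α ∈ Set.Icc 0 (supDiff F), ∀ α' ∈ Set.Icc 0 (supDiff F),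
        α ≤ α' → water F α ≤ water F α') := by
  have hLc : Continuous (lowerLift F) := lowerLift_continuous hFc hFd
  have hLd : ∀ x, lowerLift F (x + 1) = lowerLift F x + 1 := lowerLift_add_one hFc hFd
  have hLm : Monotone (lowerLift F) := lowerLift_mono hFc hFd
  have hLle : ∀ x, lowerLift F x ≤ F x := lowerLift_le hFc hFd
  have hGc : ∀ α : ℝ, Continuous (fun y => min (F y) (lowerLift F y + α)) :=
    fun α => hFc.min (hLc.add continuous_const)
  have hGd : ∀ α : ℝ, ∀ x : ℝ,
      min (F (x + 1)) (lowerLift F (x + 1) + α)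
        = min (F x) (lowerLift F x + α) + 1 := by
    intro α x
    rw [hFd x, hLd x, show lowerLift F x + 1 + α = lowerLift F x + α + 1 by ring]
    exact min_add_add_right _ _ _
  refine ⟨?_, ?_, ?_, ?_⟩
  · intro α _
    refine ⟨upperLift_mono (hGc α) (hGd α), upperLift_continuous (hGc α) (hGd α),
      fun x => upperLift_add_one (hGd α) x (bddAbove_image_Iic (hGc α) (hGd α) x)⟩
  · have hG0 : (fun y => min (F y) (lowerLift F y + 0)) = lowerLift F :=
      funext fun y => by rw [add_zero]; exact min_eq_right (hLle y)
    rw [water, hG0]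
    funext x
    apply le_antisymm
    · refine csSup_le ⟨lowerLift F x, x, Set.self_mem_Iic, rfl⟩ ?_
      rintro _ ⟨t, ht, rfl⟩
      exact hLm ht
    · exact le_csSup ⟨lowerLift F x, by rintro _ ⟨t, ht, rfl⟩; exact hLm ht⟩
        ⟨x, Set.self_mem_Iic, rfl⟩
  · have hper : Function.Periodic (fun x => F x - lowerLift F x) 1 := by
      intro x; simp only [hFd x, hLd x]; ring
    have hbdd : BddAbove (Set.range fun x => F x - lowerLift F x) := by
      rw [← hper.image_Icc one_pos 0]
      exact (isCompact_Icc).bddAbove_image ((hFc.sub hLc).continuousOn)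
    have hle : ∀ y, F y ≤ lowerLift F y + supDiff F := by
      intro y
      have := le_ciSup hbdd y
      simp only [supDiff] at *
      linarith
    have hG : (fun y => min (F y) (lowerLift F y + supDiff F)) = F :=
      funext fun y => min_eq_left (hle y)
    rw [water, hG]
  · intro α hα α' hα' hle x
    refine csSup_le ⟨min (F x) (lowerLift F x + α), x, Set.self_mem_Iic, rfl⟩ ?_
    rintro _ ⟨t, ht, rfl⟩
    refine le_trans (min_le_min le_rfl (by linarith))
      (le_csSup (bddAbove_image_Iic (hGc α') (hGd α') x) ⟨t, ht, rfl⟩)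
end

section
/- If F is a non-decreasing continuous map with F(x+1) = F(x)+1 for all x, then for every x ∈ ℝ the limit ρ(F) := lim_{n→∞} (Fⁿ(x) − x)/n exists and is independent of x. -/
open Filter

theorem rotation_number_exists (F : ℝ → ℝ) (hFc : Continuous F)
    (hFm : Monotone F) (hFd : ∀ x : ℝ, F (x + 1) = F x + 1) :
    ∃ ρ : ℝ, ∀ x : ℝ,
      Tendsto (fun n : ℕ => (F^[n] x - x) / n) atTop (nhds ρ) := by
  set f : CircleDeg1Lift := ⟨⟨F, hFm⟩, hFd⟩
  refine ⟨f.translationNumber, fun x => ?_⟩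
  have := f.tendsto_translationNumber x
  refine this.congr fun n => ?_
  rw [CircleDeg1Lift.coe_pow]
  rfl
end

section
/- The rotation number map F ↦ ρ(F), defined on the set of non-decreasing continuous maps F : ℝ → ℝ with F(x+1) = F(x)+1 (equipped with the sup-metric), is continuous and monotone: if F ≤ G pointwise then ρ(F) ≤ ρ(G). -/
open Filter

private lemma lift_int {G : ℝ → ℝ} (hGd : ∀ x : ℝ, G (x + 1) = G x + 1) (x : ℝ) (z : ℤ) :
    G (x + z) = G x + z := by
  have hper : Function.Periodic (fun x => G x - x) 1 := fun y => by
    simp only [hGd y]; ring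
  have h := (hper.int_mul z) x
  simp only [mul_one] at h
  have h' : G (x + z) - (x + z) = G x - x := h
  linarith

private lemma iter_int {G : ℝ → ℝ} (hGd : ∀ x : ℝ, G (x + 1) = G x + 1) (n : ℕ) :
    ∀ (x : ℝ) (z : ℤ), G^[n] (x + z) = G^[n] x + z := by
  induction n with
  | zero => simp
  | succ n ih =>
    intro x z
    rw [Function.iterate_succ_apply, Function.iterate_succ_apply, lift_int hGd x z, ih]

private lemma almost_bound {G : ℝ → ℝ} (hGm : Monotone G) (hGd : ∀ x : ℝ, G (x + 1) = G x + 1)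
    (m n : ℕ) :
    G^[m] 0 + G^[n] 0 - 1 ≤ G^[m + n] 0 ∧ G^[m + n] 0 ≤ G^[m] 0 + G^[n] 0 + 1 := by
  have hmono : Monotone (G^[m]) := hGm.iterate m
  set a := G^[n] 0 with ha
  have h1 : G^[m + n] 0 = G^[m] a :=
    Function.iterate_add_apply G m n 0
  have hk1 : (⌊a⌋ : ℝ) ≤ a := Int.floor_le a
  have hk2 : a < ⌊a⌋ + 1 := Int.lt_floor_add_one a
  have e1 : G^[m] ((0 : ℝ) + (⌊a⌋ : ℤ)) = G^[m] 0 + (⌊a⌋ : ℤ) := iter_int hGd m 0 ⌊a⌋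
  have e2 : G^[m] ((0 : ℝ) + ((⌊a⌋ + 1 : ℤ) : ℤ)) = G^[m] 0 + ((⌊a⌋ + 1 : ℤ) : ℤ) :=
    iter_int hGd m 0 _
  push_cast at e1 e2
  have l1 : G^[m] 0 + (⌊a⌋ : ℝ) ≤ G^[m] a := by
    rw [← e1]
    exact hmono (by linarith)
  have l2 : G^[m] a ≤ G^[m] 0 + ((⌊a⌋ : ℝ) + 1) := by
    rw [← e2]
    exact hmono (by linarith)
  constructor <;> rw [h1] <;> linarith

private lemma rho_bound {G : ℝ → ℝ} {ρG : ℝ} (hGm : Monotone G)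
    (hGd : ∀ x : ℝ, G (x + 1) = G x + 1)
    (hρG : Tendsto (fun n : ℕ => (G^[n] 0 - 0) / n) atTop (nhds ρG))
    (n : ℕ) (hn : 0 < n) :
    G^[n] 0 - 1 ≤ (n : ℝ) * ρG ∧ (n : ℝ) * ρG ≤ G^[n] 0 + 1 := by
  have key : ∀ k : ℕ, (k : ℝ) * (G^[n] 0 - 1) ≤ G^[k * n] 0 ∧
      G^[k * n] 0 ≤ (k : ℝ) * (G^[n] 0 + 1) := by
    intro k
    induction k with
    | zero => simp
    | succ k ih =>
      have h := almost_bound hGm hGd (k * n) n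
      rw [Nat.succ_mul]
      constructor <;> push_cast <;> nlinarith [ih.1, ih.2, h.1, h.2]
  have hmul : Tendsto (fun k : ℕ => k * n) atTop atTop := by
    apply Filter.tendsto_atTop_atTop_of_monotone (fun a b h => Nat.mul_le_mul_right n h)
    exact fun b => ⟨b, Nat.le_mul_of_pos_right b hn⟩
  have hsub : Tendsto (fun k : ℕ => (G^[k * n] 0 - 0) / ((k * n : ℕ) : ℝ)) atTop (nhds ρG) :=
    hρG.comp hmul
  have hnR : (0 : ℝ) < n := by exact_mod_cast hn
  have hub : ρG ≤ (G^[n] 0 + 1) / n := by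
    refine le_of_tendsto hsub ?_
    filter_upwards [eventually_ge_atTop 1] with k hk
    have hkR : (1 : ℝ) ≤ (k : ℝ) := by exact_mod_cast hk
    have hpos : (0 : ℝ) < (k : ℝ) * n := by nlinarith
    rw [div_le_div_iff₀ (by push_cast; nlinarith) hnR]
    have := (key k).2
    push_cast
    nlinarith
  have hlb : (G^[n] 0 - 1) / n ≤ ρG := by
    refine ge_of_tendsto hsub ?_
    filter_upwards [eventually_ge_atTop 1] with k hk
    have hkR : (1 : ℝ) ≤ (k : ℝ) := by exact_mod_cast hk
    have hpos : (0 : ℝ) < (k : ℝ) * n := by nlinarith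
    rw [div_le_div_iff₀ hnR (by push_cast; nlinarith)]
    have := (key k).1
    push_cast
    nlinarith
  rw [div_le_iff₀ hnR] at hlb
  rw [le_div_iff₀ hnR] at hub
  constructor <;> nlinarith

private lemma unif {F : ℝ → ℝ} (hFc : Continuous F) (hFd : ∀ x : ℝ, F (x + 1) = F x + 1) :
    ∀ ε > (0 : ℝ), ∃ δ > (0 : ℝ), ∀ x y : ℝ, |x - y| ≤ δ → |F x - F y| ≤ ε := by
  intro ε hε
  set g : ℝ → ℝ := fun x => F x - x with hg
  have hgc : Continuous g := hFc.sub continuous_id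
  have hper : Function.Periodic g 1 := fun y => by
    simp only [hg, hFd y]; ring
  have hgz : ∀ (t : ℝ) (z : ℤ), g (t + z) = g t := by
    intro t z
    have h := (hper.int_mul z) t
    simpa using h
  have huc := (isCompact_Icc (a := (-1 : ℝ)) (b := 2)).uniformContinuousOn_of_continuous
    hgc.continuousOn
  rw [Metric.uniformContinuousOn_iff] at huc
  obtain ⟨δ₀, hδ₀, hδ₀p⟩ := huc (ε / 2) (by positivity)
  refine ⟨min (min (δ₀ / 2) (1 / 2)) (ε / 2), by positivity, fun x y hxy => ?_⟩
  set k : ℤ := ⌊x⌋ with hk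
  have hx1 : (k : ℝ) ≤ x := Int.floor_le x
  have hx2 : x < k + 1 := Int.lt_floor_add_one x
  have hd1 : |x - y| ≤ δ₀ / 2 := hxy.trans ((min_le_left _ _).trans (min_le_left _ _))
  have hd2 : |x - y| ≤ 1 / 2 := hxy.trans ((min_le_left _ _).trans (min_le_right _ _))
  have hd3 : |x - y| ≤ ε / 2 := hxy.trans (min_le_right _ _)
  have habs := abs_le.mp hd2
  have hxmem : x - k ∈ Set.Icc (-1 : ℝ) 2 := ⟨by linarith, by linarith⟩
  have hymem : y - k ∈ Set.Icc (-1 : ℝ) 2 := ⟨by linarith, by linarith⟩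
  have hgx : g x = g (x - k) := by
    have := hgz (x - k) k
    simpa using this
  have hgy : g y = g (y - k) := by
    have := hgz (y - k) k
    simpa using this
  have hdist : dist (x - k) (y - k) < δ₀ := by
    rw [Real.dist_eq]
    have : x - k - (y - k) = x - y := by ring
    rw [this]
    calc |x - y| ≤ δ₀ / 2 := hd1
      _ < δ₀ := by linarith
  have hgxy := hδ₀p _ hxmem _ hymem hdist
  rw [← hgx, ← hgy, Real.dist_eq] at hgxy
  have hFxy : F x - F y = (g x - g y) + (x - y) := by simp only [hg]; ring
  calc |F x - F y| = |(g x - g y) + (x - y)| := by rw [hFxy]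
    _ ≤ |g x - g y| + |x - y| := abs_add_le _ _
    _ ≤ ε / 2 + ε / 2 := by linarith
    _ = ε := by ring

private lemma track {F : ℝ → ℝ} (hFc : Continuous F) (hFd : ∀ x : ℝ, F (x + 1) = F x + 1) :
    ∀ n : ℕ, ∀ ε > (0 : ℝ), ∃ δ > (0 : ℝ), ∀ G : ℝ → ℝ, (∀ x : ℝ, |F x - G x| ≤ δ) →
      ∀ x : ℝ, |F^[n] x - G^[n] x| ≤ ε := by
  intro n
  induction n with
  | zero => exact fun ε hε => ⟨ε, hε, fun G hG x => by simpa using hε.le⟩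
  | succ n ih =>
    intro ε hε
    obtain ⟨η, hη, hηp⟩ := unif hFc hFd (ε / 2) (by positivity)
    obtain ⟨δ', hδ', hδ'p⟩ := ih (min η (ε / 2)) (by positivity)
    refine ⟨min δ' (ε / 2), by positivity, fun G hG x => ?_⟩
    have hGclose : ∀ y : ℝ, |F y - G y| ≤ δ' := fun y => (hG y).trans (min_le_left _ _)
    have h1 := hδ'p G hGclose x
    rw [Function.iterate_succ_apply', Function.iterate_succ_apply']
    have h2 : |F (F^[n] x) - F (G^[n] x)| ≤ ε / 2 :=
      hηp _ _ (h1.trans (min_le_left _ _))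
    have h3 : |F (G^[n] x) - G (G^[n] x)| ≤ ε / 2 := (hG _).trans (min_le_right _ _)
    calc |F (F^[n] x) - G (G^[n] x)|
        ≤ |F (F^[n] x) - F (G^[n] x)| + |F (G^[n] x) - G (G^[n] x)| := abs_sub_le _ _ _
      _ ≤ ε / 2 + ε / 2 := by linarith
      _ = ε := by ring

theorem rotation_number_continuous_and_monotone (F : ℝ → ℝ)
    (hFc : Continuous F) (hFm : Monotone F)
    (hFd : ∀ x : ℝ, F (x + 1) = F x + 1) (ρF : ℝ)
    (hρF : ∀ x : ℝ, Tendsto (fun n : ℕ => (F^[n] x - x) / n) atTop (nhds ρF)) :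
    (∀ G : ℝ → ℝ, ∀ ρG : ℝ, Continuous G → Monotone G →
        (∀ x : ℝ, G (x + 1) = G x + 1) →
        (∀ x : ℝ, Tendsto (fun n : ℕ => (G^[n] x - x) / n) atTop (nhds ρG)) →
        F ≤ G → ρF ≤ ρG) ∧
    (∀ ε > (0 : ℝ), ∃ δ > (0 : ℝ), ∀ G : ℝ → ℝ, ∀ ρG : ℝ,
        Continuous G → Monotone G → (∀ x : ℝ, G (x + 1) = G x + 1) →
        (∀ x : ℝ, Tendsto (fun n : ℕ => (G^[n] x - x) / n) atTop (nhds ρG)) →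
        (∀ x : ℝ, |F x - G x| ≤ δ) → |ρF - ρG| ≤ ε) := by
  constructor
  · intro G ρG hGc hGm hGd hρG hle
    have hiter : ∀ n : ℕ, F^[n] 0 ≤ G^[n] 0 := by
      intro n
      induction n with
      | zero => exact le_refl _
      | succ n ih =>
        rw [Function.iterate_succ_apply', Function.iterate_succ_apply']
        calc F (F^[n] 0) ≤ F (G^[n] 0) := hFm ih
          _ ≤ G (G^[n] 0) := hle _
    refine le_of_tendsto_of_tendsto' (hρF 0) (hρG 0) fun n => ?_
    rw [div_eq_mul_inv, div_eq_mul_inv]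
    exact mul_le_mul_of_nonneg_right (by linarith [hiter n]) (by positivity)
  · intro ε hε
    set n : ℕ := max 1 ⌈3 / ε⌉₊ with hn
    have hn1 : 0 < n := lt_of_lt_of_le one_pos (le_max_left _ _)
    have hnR : (0 : ℝ) < n := by exact_mod_cast hn1
    have hceil : 3 / ε ≤ (n : ℝ) := by
      calc 3 / ε ≤ (⌈3 / ε⌉₊ : ℝ) := Nat.le_ceil _
        _ ≤ (n : ℝ) := by exact_mod_cast le_max_right _ _
    have h3n : 3 / (n : ℝ) ≤ ε := by
      rw [div_le_iff₀ hnR]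
      rw [div_le_iff₀ hε] at hceil
      nlinarith
    obtain ⟨δ, hδ, hδp⟩ := track hFc hFd n 1 one_pos
    refine ⟨δ, hδ, fun G ρG hGc hGm hGd hρG hclose => ?_⟩
    have hT := hδp G hclose 0
    have hbF := rho_bound hFm hFd (hρF 0) n hn1
    have hbG := rho_bound hGm hGd (hρG 0) n hn1
    have hTa := abs_le.mp hT
    have h3 : |ρF - ρG| ≤ 3 / (n : ℝ) := by
      rw [abs_le]
      constructor
      · rw [neg_le, ← neg_sub, le_div_iff₀ hnR]
        nlinarith [hbF.1, hbG.2, hTa.1, hTa.2]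
      · rw [le_div_iff₀ hnR]
        nlinarith [hbF.2, hbG.1, hTa.1, hTa.2]
    exact h3.trans h3n
end

section
/- Let f : S¹ → S¹ be continuous without periodic points, μ an f-invariant probability measure, θ ∈ supp(μ), and define A₀ = {θ}, A_{i} = f⁻¹(A_{i−1}) ∩ supp(μ). Then the sets A_i are pairwise disjoint. -/
open MeasureTheory

/-- The (topological) support of a measure. -/
def measSupp (μ : Measure (AddCircle (1 : ℝ))) : Set (AddCircle (1 : ℝ)) :=
  {θ | ∀ U : Set (AddCircle (1 : ℝ)), IsOpen U → θ ∈ U → 0 < μ U}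

theorem preimage_sets_pairwise_disjoint
    (f : AddCircle (1 : ℝ) → AddCircle (1 : ℝ)) (hf : Continuous f)
    (hnoper : ¬ ∃ (θ : AddCircle (1 : ℝ)) (n : ℕ), 1 ≤ n ∧ f^[n] θ = θ)
    (μ : Measure (AddCircle (1 : ℝ))) [IsProbabilityMeasure μ]
    (hinv : ∀ A : Set (AddCircle (1 : ℝ)), MeasurableSet A → μ (f ⁻¹' A) = μ A)
    (θ : AddCircle (1 : ℝ)) (hθ : θ ∈ measSupp μ)
    (A : ℕ → Set (AddCircle (1 : ℝ)))
    (hA0 : A 0 = {θ})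
    (hAsucc : ∀ i : ℕ, A (i + 1) = f ⁻¹' (A i) ∩ measSupp μ) :
    ∀ i j : ℕ, i ≠ j → Disjoint (A i) (A j) := by
  have key : ∀ i x, x ∈ A i → f^[i] x = θ := by
    intro i
    induction i with
    | zero => intro x hx; rw [hA0] at hx; simpa using hx
    | succ n ih =>
      intro x hx
      rw [hAsucc] at hx
      have := ih (f x) hx.1
      rwa [Function.iterate_succ_apply]
  -- wlog i < j
  have main : ∀ i j : ℕ, i < j → Disjoint (A i) (A j) := by
    intro i j hij
    rw [Set.disjoint_left]
    intro x hxi hxj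
    apply hnoper
    refine ⟨θ, j - i, by omega, ?_⟩
    have h1 := key i x hxi
    have h2 := key j x hxj
    have : f^[j - i] (f^[i] x) = f^[j] x := by
      rw [← Function.iterate_add_apply]
      congr 1
      omega
    rw [h1, h2] at this
    exact this
  intro i j hij
  rcases lt_or_gt_of_ne hij with h | h
  · exact main i j h
  · exact (main j i h).symm
end

section
/- Let f be a continuous degree-one circle map with non-decreasing lifting F, ρ(F) irrational, and h a non-decreasing continuous semiconjugacy of f to R_{ρ(F)}. Let P be the unique minimal set of f and define 𝒰 to be P minus the union over boundary points θ of complementary intervals of P of all sets ∪_{n≥0} Orb⁻_f(fⁿ(θ)) ∩ P. Then h restricted to 𝒰 is injective. -/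
open Filter

/-- The backward orbit `Orb⁻_f(θ) = ∪_{m ≥ 0} f⁻ᵐ({θ})`. -/
def backOrbit (f : AddCircle (1 : ℝ) → AddCircle (1 : ℝ)) (θ : AddCircle (1 : ℝ)) :
    Set (AddCircle (1 : ℝ)) :=
  ⋃ m : ℕ, f^[m] ⁻¹' {θ}

/-- The set `P̃` of endpoints of the connected components of the complement of `P`. -/
def endpointsSet (P : Set (AddCircle (1 : ℝ))) : Set (AddCircle (1 : ℝ)) :=
  {θ | ∃ c ∉ P, θ ∈ closure (connectedComponentIn Pᶜ c) ∧
        θ ∉ connectedComponentIn Pᶜ c}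

/-- The removed set `𝒰ᶜ := (∪_{θ ∈ P̃} ∪_{n ≥ 0} Orb⁻_f(fⁿ(θ))) ∩ P`. -/
def removedSet (f : AddCircle (1 : ℝ) → AddCircle (1 : ℝ)) (P : Set (AddCircle (1 : ℝ))) :
    Set (AddCircle (1 : ℝ)) :=
  (⋃ θ ∈ endpointsSet P, ⋃ n : ℕ, backOrbit f (f^[n] θ)) ∩ P

theorem semiconjugacy_injective_on_U
    (f : AddCircle (1 : ℝ) → AddCircle (1 : ℝ)) (hf : Continuous f)
    (F : ℝ → ℝ) (hFc : Continuous F) (hFm : Monotone F)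
    (hFd : ∀ x : ℝ, F (x + 1) = F x + 1)
    (hFlift : ∀ x : ℝ, f (x : AddCircle (1 : ℝ)) = ((F x : ℝ) : AddCircle (1 : ℝ)))
    (ρ : ℝ) (hρirr : Irrational ρ)
    (hρ : ∀ x : ℝ, Tendsto (fun n : ℕ => (F^[n] x - x) / n) atTop (nhds ρ))
    (h : AddCircle (1 : ℝ) → AddCircle (1 : ℝ)) (hh : Continuous h)
    (H : ℝ → ℝ) (hHc : Continuous H) (hHm : Monotone H)
    (hHd : ∀ x : ℝ, H (x + 1) = H x + 1)
    (hHlift : ∀ x : ℝ, h (x : AddCircle (1 : ℝ)) = ((H x : ℝ) : AddCircle (1 : ℝ)))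
    (hsemi : ∀ θ : AddCircle (1 : ℝ), h (f θ) = h θ + (ρ : AddCircle (1 : ℝ)))
    (P : Set (AddCircle (1 : ℝ))) (hPne : P.Nonempty) (hPcl : IsClosed P)
    (hPinv : f '' P = P)
    (hPmin : ∀ θ ∈ P, P ⊆ closure (Set.range fun n : ℕ => f^[n] θ)) :
    Set.InjOn h (P \ removedSet f P) := by
  have hcoe : Continuous ((↑) : ℝ → AddCircle (1 : ℝ)) := AddCircle.continuous_mk' 1
  -- iterated semiconjugacy
  have hiter : ∀ (n : ℕ) (θ : AddCircle (1 : ℝ)),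
      h (f^[n] θ) = h θ + (((n : ℝ) * ρ : ℝ) : AddCircle (1 : ℝ)) := by
    intro n
    induction n with
    | zero => intro θ; simp
    | succ n ih =>
      intro θ
      rw [Function.iterate_succ_apply', hsemi, ih]
      have e : (((n : ℕ) + 1 : ℕ) : ℝ) * ρ = (n : ℝ) * ρ + ρ := by push_cast; ring
      rw [e, add_assoc]
      rfl
  -- irrationality: (n+1)ρ is not an integer
  have hrho_ne : ∀ n : ℕ, ((((n : ℝ) + 1) * ρ : ℝ) : AddCircle (1 : ℝ)) ≠ 0 := by
    intro n heq
    obtain ⟨k, hk⟩ := (AddCircle.coe_eq_zero_iff 1).mp heq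
    simp only [zsmul_eq_mul, mul_one] at hk
    have hn : ((n : ℝ) + 1) ≠ 0 := by positivity
    exact hρirr ⟨(k : ℚ) / ((n : ℚ) + 1), by
      push_cast
      rw [div_eq_iff hn]
      linarith [hk]⟩
  -- the key arc lemma
  have key : ∀ x₁ x₂ : ℝ, x₁ < x₂ → H x₂ = H x₁ →
      ((x₁ : AddCircle (1 : ℝ)) ∈ P \ removedSet f P) →
      ((x₂ : AddCircle (1 : ℝ)) ∈ P \ removedSet f P) → False := by
    intro x₁ x₂ hlt hHeq hm₁ hm₂
    have hconst : ∀ z ∈ Set.Icc x₁ x₂,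
        h ((z : AddCircle (1 : ℝ))) = h ((x₁ : AddCircle (1 : ℝ))) := by
      intro z hz
      have h1 : H z = H x₁ := le_antisymm (hHeq ▸ hHm hz.2) (hHm hz.1)
      rw [hHlift, hHlift, h1]
    by_cases hc : ∀ y ∈ Set.Ioo x₁ x₂, ((y : AddCircle (1 : ℝ)) ∉ P)
    · -- the open arc misses P : x₁ is an endpoint of a gap
      set c₀ : AddCircle (1 : ℝ) := (((x₁ + x₂) / 2 : ℝ) : AddCircle (1 : ℝ)) with hc₀
      set s : Set (AddCircle (1 : ℝ)) :=
        ((↑) : ℝ → AddCircle (1 : ℝ)) '' Set.Ioo x₁ x₂ with hs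
      have hsP : s ⊆ Pᶜ := by rintro _ ⟨y, hy, rfl⟩; exact hc y hy
      have hc₀s : c₀ ∈ s := ⟨(x₁ + x₂) / 2, ⟨by linarith, by linarith⟩, rfl⟩
      have hscon : IsPreconnected s := isPreconnected_Ioo.image _ hcoe.continuousOn
      have hsub : s ⊆ connectedComponentIn Pᶜ c₀ :=
        hscon.subset_connectedComponentIn hc₀s hsP
      have hcl : (x₁ : AddCircle (1 : ℝ)) ∈ closure (connectedComponentIn Pᶜ c₀) := by
        apply closure_mono hsub
        have hx₁cl : (x₁ : AddCircle (1 : ℝ)) ∈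
            ((↑) : ℝ → AddCircle (1 : ℝ)) '' closure (Set.Ioo x₁ x₂) :=
          ⟨x₁, by rw [closure_Ioo hlt.ne]; exact ⟨le_refl _, hlt.le⟩, rfl⟩
        exact image_closure_subset_closure_image hcoe hx₁cl
      have hend : (x₁ : AddCircle (1 : ℝ)) ∈ endpointsSet P :=
        ⟨c₀, hsP hc₀s, hcl, fun hx => (connectedComponentIn_subset _ _ hx) hm₁.1⟩
      apply hm₁.2
      refine ⟨Set.mem_biUnion hend ?_, hm₁.1⟩
      refine Set.mem_iUnion.mpr ⟨0, Set.mem_iUnion.mpr ⟨0, ?_⟩⟩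
      simp
    · -- the open arc meets P : recurrence gives a contradiction with irrationality
      push_neg at hc
      obtain ⟨y, hy, hyP⟩ := hc
      set p : AddCircle (1 : ℝ) := (y : AddCircle (1 : ℝ)) with hp
      set S : Set (AddCircle (1 : ℝ)) := Set.range (fun n : ℕ => f^[n + 1] p) with hS
      have hrec : p ∈ closure S := by
        by_contra hns
        have hQcl : IsClosed (insert p (closure S)) := by
          rw [Set.insert_eq]; exact isClosed_singleton.union isClosed_closure
        have hsubQ : closure (Set.range fun n : ℕ => f^[n] p) ⊆ insert p (closure S) := by
          apply closure_minimal _ hQcl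
          rintro _ ⟨n, rfl⟩
          cases n with
          | zero => simp
          | succ n => exact Set.mem_insert_of_mem _ (subset_closure ⟨n, rfl⟩)
        obtain ⟨p', hp'P, hfp'⟩ : ∃ p' ∈ P, f p' = p := by
          have hmem : p ∈ f '' P := by rw [hPinv]; exact hyP
          exact hmem
        have hmem := hsubQ (hPmin p hyP hp'P)
        rcases hmem with heq | hmem
        · apply hns
          apply subset_closure
          exact ⟨0, by rw [heq] at hfp'; simpa using hfp'⟩
        · have himg : p ∈ closure (f '' S) := by
            rw [← hfp']
            exact image_closure_subset_closure_image hf ⟨p', hmem, rfl⟩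
          have himgsub : f '' S ⊆ S := by
            rintro _ ⟨_, ⟨n, rfl⟩, rfl⟩
            exact ⟨n + 1, by exact Function.iterate_succ_apply' f (n + 1) p⟩
          exact hns (closure_mono himgsub (closure_minimal subset_closure isClosed_closure himg))
      have hUopen : IsOpen (((↑) : ℝ → AddCircle (1 : ℝ)) '' Set.Ioo x₁ x₂) :=
        QuotientAddGroup.isOpenMap_coe _ isOpen_Ioo
      have hpU : p ∈ ((↑) : ℝ → AddCircle (1 : ℝ)) '' Set.Ioo x₁ x₂ := ⟨y, hy, rfl⟩
      obtain ⟨z, hzU, hzS⟩ := _root_.mem_closure_iff.mp hrec _ hUopen hpU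
      obtain ⟨n, rfl⟩ := hzS
      obtain ⟨t, ht, hteq⟩ := hzU
      have e1 : h (f^[n + 1] p) = h p + ((((n + 1 : ℕ) : ℝ) * ρ : ℝ) : AddCircle (1 : ℝ)) :=
        hiter (n + 1) p
      have hteq' : f^[n + 1] p = ((t : ℝ) : AddCircle (1 : ℝ)) := by exact hteq.symm
      have e2 : h (f^[n + 1] p) = h ((x₁ : AddCircle (1 : ℝ))) := by
        rw [hteq']; exact hconst t (Set.mem_Icc_of_Ioo ht)
      have e3 : h p = h ((x₁ : AddCircle (1 : ℝ))) := hconst y (Set.mem_Icc_of_Ioo hy)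
      have ez : ((((n : ℝ) + 1) * ρ : ℝ) : AddCircle (1 : ℝ)) = 0 := by
        have e4 : h ((x₁ : AddCircle (1 : ℝ)))
            + ((((n + 1 : ℕ) : ℝ) * ρ : ℝ) : AddCircle (1 : ℝ))
            = h ((x₁ : AddCircle (1 : ℝ))) := by
          rw [← e3, ← e1, e2, e3]
        have e5 := add_eq_left.mp e4
        have : (((n + 1 : ℕ) : ℝ)) = (n : ℝ) + 1 := by push_cast; ring
        rw [this] at e5
        exact e5
      exact hrho_ne n ez
  -- main argument
  intro θ₁ hθ₁ θ₂ hθ₂ hval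
  by_contra hne
  obtain ⟨x₁, rfl⟩ := QuotientAddGroup.mk_surjective θ₁
  obtain ⟨x, hx⟩ := QuotientAddGroup.mk_surjective θ₂
  set x₂ : ℝ := x₁ + Int.fract (x - x₁) with hx₂def
  have hx₂eq : ((x₂ : ℝ) : AddCircle (1 : ℝ)) = θ₂ := by
    rw [← hx]
    rw [QuotientAddGroup.eq_iff_sub_mem]
    refine ⟨-⌊x - x₁⌋, ?_⟩
    simp only [zsmul_eq_mul, mul_one]
    rw [hx₂def, Int.fract]
    push_cast
    ring
  have hle : x₁ ≤ x₂ := by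
    rw [hx₂def]; linarith [Int.fract_nonneg (x - x₁)]
  have hlt1 : x₂ < x₁ + 1 := by
    rw [hx₂def]; linarith [Int.fract_lt_one (x - x₁)]
  have hlt : x₁ < x₂ := by
    rcases lt_or_eq_of_le hle with h' | h'
    · exact h'
    · exfalso; apply hne; rw [← hx₂eq, ← h']
  -- H x₂ - H x₁ is an integer in [0, 1]
  have hvv : ((H x₁ : ℝ) : AddCircle (1 : ℝ)) = ((H x₂ : ℝ) : AddCircle (1 : ℝ)) := by
    rw [← hHlift, ← hHlift, hx₂eq]; exact hval
  obtain ⟨k, hk⟩ := (QuotientAddGroup.eq_iff_sub_mem).mp hvv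
  simp only [zsmul_eq_mul, mul_one] at hk
  have hk0 : (0 : ℝ) ≤ -(k : ℝ) := by
    have := hHm hle
    linarith [hk]
  have hk1 : -(k : ℝ) ≤ 1 := by
    have h2 : H x₂ ≤ H (x₁ + 1) := hHm hlt1.le
    rw [hHd] at h2
    linarith [hk]
  have hkcase : k = 0 ∨ k = -1 := by
    have h0 : (0 : ℤ) ≤ -k := by exact_mod_cast hk0
    have h1 : -k ≤ (1 : ℤ) := by exact_mod_cast hk1
    omega
  have hθ₂' : ((x₂ : ℝ) : AddCircle (1 : ℝ)) ∈ P \ removedSet f P := by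
    rw [hx₂eq]; exact hθ₂
  rcases hkcase with hk' | hk'
  · -- H x₂ = H x₁
    have : H x₂ = H x₁ := by
      rw [hk'] at hk; push_cast at hk; linarith
    exact key x₁ x₂ hlt this hθ₁ hθ₂'
  · -- H x₂ = H (x₁ + 1); use the complementary arc [x₂, x₁ + 1]
    have hHeq : H (x₁ + 1) = H x₂ := by
      rw [hHd]
      rw [hk'] at hk; push_cast at hk; linarith
    have hθ₁' : (((x₁ + 1 : ℝ)) : AddCircle (1 : ℝ)) ∈ P \ removedSet f P := by
      rw [AddCircle.coe_add_period 1 x₁]; exact hθ₁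
    exact key x₂ (x₁ + 1) hlt1 hHeq hθ₂' hθ₁'
end

section
/- Let f be a continuous circle map without periodic points with unique minimal set P, and let 𝒰ᶜ := (∪_{θ ∈ P̃} ∪_{n≥0} Orb⁻_f(fⁿ(θ))) ∩ P where P̃ is the set of endpoints of connected components of S¹ \ P, and 𝒰 := P \ 𝒰ᶜ. Then f(𝒰ᶜ) ⊂ 𝒰ᶜ, f⁻¹(θ) ∩ P ⊂ 𝒰ᶜ for every θ ∈ 𝒰ᶜ, and consequently f(𝒰) = 𝒰. -/
theorem removedSet_invariance
    (f : AddCircle (1 : ℝ) → AddCircle (1 : ℝ)) (hf : Continuous f)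
    (hnoper : ¬ ∃ (θ : AddCircle (1 : ℝ)) (n : ℕ), 1 ≤ n ∧ f^[n] θ = θ)
    (P : Set (AddCircle (1 : ℝ))) (hPne : P.Nonempty) (hPcl : IsClosed P)
    (hPinv : f '' P = P)
    (hPmin : ∀ θ ∈ P, P ⊆ closure (Set.range fun n : ℕ => f^[n] θ)) :
    f '' removedSet f P ⊆ removedSet f P ∧
    (∀ θ ∈ removedSet f P, f ⁻¹' {θ} ∩ P ⊆ removedSet f P) ∧
    f '' (P \ removedSet f P) = P \ removedSet f P := by
  have hmem : ∀ x, x ∈ removedSet f P ↔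
      (∃ θ ∈ endpointsSet P, ∃ n m : ℕ, f^[m] x = f^[n] θ) ∧ x ∈ P := by
    intro x
    simp only [removedSet, backOrbit, Set.mem_inter_iff, Set.mem_iUnion,
      Set.mem_preimage, Set.mem_singleton_iff, exists_prop]
  have h1 : f '' removedSet f P ⊆ removedSet f P := by
    rintro y ⟨x, hx, rfl⟩
    rw [hmem] at hx ⊢
    obtain ⟨⟨θ, hθ, n, m, hmn⟩, hxP⟩ := hx
    refine ⟨?_, by rw [← hPinv]; exact ⟨x, hxP, rfl⟩⟩
    cases m with
    | zero =>
        refine ⟨θ, hθ, n + 1, 0, ?_⟩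
        simp only [Function.iterate_zero_apply] at hmn ⊢
        rw [hmn, Function.iterate_succ_apply']
    | succ m =>
        exact ⟨θ, hθ, n, m, by rw [← hmn, ← Function.iterate_succ_apply]⟩
  have h2 : ∀ θ ∈ removedSet f P, f ⁻¹' {θ} ∩ P ⊆ removedSet f P := by
    rintro θ hθ x ⟨hfx, hxP⟩
    rw [hmem] at hθ ⊢
    obtain ⟨⟨θ₀, hθ₀, n, m, hmn⟩, _⟩ := hθ
    refine ⟨⟨θ₀, hθ₀, n, m + 1, ?_⟩, hxP⟩
    rw [Function.iterate_succ_apply, Set.mem_preimage, Set.mem_singleton_iff] at *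
    rw [hfx]; exact hmn
  refine ⟨h1, h2, ?_⟩
  ext y
  constructor
  · rintro ⟨x, ⟨hxP, hxR⟩, rfl⟩
    exact ⟨by rw [← hPinv]; exact ⟨x, hxP, rfl⟩,
      fun hR => hxR (h2 _ hR ⟨rfl, hxP⟩)⟩
  · rintro ⟨hyP, hyR⟩
    rw [← hPinv] at hyP
    obtain ⟨x, hxP, rfl⟩ := hyP
    exact ⟨x, ⟨hxP, fun hR => hyR (h1 ⟨x, hR, rfl⟩)⟩, rfl⟩
end
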